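/- Let μ_x, μ_y > 0, L_{xx}, L_{yy} ≥ 0, L_{xy}, L_{yx} > 0, and ρ ∈ (0,1). For τ > 0 define S_ρ(τ) as the set of triples (σ, θ, α) with σ > 0, θ ≥ 0, α ∈ [0, 1/σ) for which the 5×5 matrix G(τ,σ,θ,α,ρ) (with diagonal (1/τ + μ_x − 1/(ρτ), 1/σ + μ_y − 1/(ρσ), 1/τ − L_{xx}, 1/σ − α, α/ρ) and off-diagonals G(2,3) = (θ/ρ−1)L_{yx}, G(2,4) = (θ/ρ−1)L_{yy}, G(3,5) = −(θ/ρ)L_{yx}, G(4,5) = −(θ/ρ)L_{yy}, zeros elsewhere) is positive semidefinite. Suppose ∪_{τ>0} S_ρ(τ) ≠ ∅. Then: (i) min{τ > 0 : S_ρ(τ) ≠ ∅} = (1−ρ)/(μ_x ρ); (ii) for all τ₁ ≥ τ₂ ≥ (1−ρ)/(μ_x ρ), S_ρ(τ₁) ⊆ S_ρ(τ₂). -/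

import Mathlib

open Matrix


/-- The 5×5 matrix `G` from the SAPD step-size condition. -/
noncomputable def sapdG (Lxx Lyy Lyx μx μy τ σ θ α ρ : ℝ) : Matrix (Fin 5) (Fin 5) ℝ :=
  !![1 / τ + μx - 1 / (ρ * τ), 0, 0, 0, 0;
     0, 1 / σ + μy - 1 / (ρ * σ), (θ / ρ - 1) * Lyx, (θ / ρ - 1) * Lyy, 0;
     0, (θ / ρ - 1) * Lyx, 1 / τ - Lxx, 0, -(θ / ρ) * Lyx;
     0, (θ / ρ - 1) * Lyy, 0, 1 / σ - α, -(θ / ρ) * Lyy;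
     0, 0, -(θ / ρ) * Lyx, -(θ / ρ) * Lyy, α / ρ]

/-- The admissible parameter set `S_ρ(τ)` of triples `(σ, θ, α)`. -/
noncomputable def sapdS (Lxx Lyy Lyx μx μy ρ : ℝ) (τ : ℝ) : Set (ℝ × ℝ × ℝ) :=
  {p | 0 < p.1 ∧ 0 ≤ p.2.1 ∧ 0 ≤ p.2.2 ∧ p.2.2 < 1 / p.1 ∧
    (sapdG Lxx Lyy Lyx μx μy τ p.1 p.2.1 p.2.2 ρ).PosSemidef}

lemma sapdG_quad (Lxx Lyy Lyx μx μy τ σ θ α ρ : ℝ) (x : Fin 5 → ℝ) :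
    dotProduct (star x) ((sapdG Lxx Lyy Lyx μx μy τ σ θ α ρ) *ᵥ x) =
      (1 / τ + μx - 1 / (ρ * τ)) * x 0 ^ 2
      + (1 / σ + μy - 1 / (ρ * σ)) * x 1 ^ 2
      + (1 / τ - Lxx) * x 2 ^ 2 + (1 / σ - α) * x 3 ^ 2 + (α / ρ) * x 4 ^ 2
      + 2 * ((θ / ρ - 1) * Lyx) * x 1 * x 2
      + 2 * ((θ / ρ - 1) * Lyy) * x 1 * x 3
      - 2 * ((θ / ρ) * Lyx) * x 2 * x 4
      - 2 * ((θ / ρ) * Lyy) * x 3 * x 4 := by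
  simp [sapdG, dotProduct, Matrix.mulVec, Fin.sum_univ_five, Matrix.cons_val_zero,
    Matrix.cons_val_one, Matrix.head_cons, Matrix.vecHead, Matrix.vecTail, Function.comp]
  ring

lemma sapdG_herm (Lxx Lyy Lyx μx μy τ σ θ α ρ : ℝ) :
    (sapdG Lxx Lyy Lyx μx μy τ σ θ α ρ).IsHermitian := by
  unfold Matrix.IsHermitian
  ext i j
  fin_cases i <;> fin_cases j <;>
    simp [sapdG, Matrix.vecHead, Matrix.vecTail]

/-- Key monotonicity step for the matrix `G`. -/
lemma sapdG_mono (Lxx Lyy Lyx μx μy τ₁ τ₂ σ θ α ρ : ℝ)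
    (hμx : 0 < μx) (hρ0 : 0 < ρ)
    (h2 : (1 - ρ) / (μx * ρ) ≤ τ₂) (h02 : 0 < τ₂) (h21 : τ₂ ≤ τ₁)
    (h : (sapdG Lxx Lyy Lyx μx μy τ₁ σ θ α ρ).PosSemidef) :
    (sapdG Lxx Lyy Lyx μx μy τ₂ σ θ α ρ).PosSemidef := by
  have h01 : 0 < τ₁ := lt_of_lt_of_le h02 h21
  refine Matrix.PosSemidef.of_dotProduct_mulVec_nonneg (sapdG_herm _ _ _ _ _ _ _ _ _ _) (fun x => ?_)
  have hy := h.dotProduct_mulVec_nonneg ![0, x 1, x 2, x 3, x 4]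
  rw [sapdG_quad] at hy
  rw [sapdG_quad]
  simp only [Matrix.cons_val_zero, Matrix.cons_val_one, Matrix.head_cons,
    Matrix.cons_val_two, Matrix.tail_cons, Matrix.cons_val_three,
    Matrix.cons_val_four] at hy
  have hc : 0 ≤ 1 / τ₂ + μx - 1 / (ρ * τ₂) := by
    have h2' : 1 - ρ ≤ τ₂ * (μx * ρ) := (div_le_iff₀ (by positivity)).mp h2
    have e1 : 1 / τ₂ + μx - 1 / (ρ * τ₂) = (τ₂ * (μx * ρ) - (1 - ρ)) / (ρ * τ₂) := by
      field_simp
      ring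
    rw [e1]
    apply div_nonneg (by linarith) (by positivity)
  have hτ : 1 / τ₁ ≤ 1 / τ₂ := one_div_le_one_div_of_le h02 h21
  nlinarith [mul_nonneg hc (sq_nonneg (x 0)),
    mul_nonneg (sub_nonneg.mpr hτ) (sq_nonneg (x 2)), hy]

/-- Lemma on monotonicity of the admissible set in `τ`:
(i) the smallest `τ > 0` with `S_ρ(τ) ≠ ∅` is `(1−ρ)/(μxρ)`;
(ii) `S_ρ(τ₁) ⊆ S_ρ(τ₂)` whenever `τ₁ ≥ τ₂ ≥ (1−ρ)/(μxρ)`. -/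
theorem sapdS_monotone
    (Lxx Lyy Lyx Lxy μx μy ρ : ℝ)
    (hLxx : 0 ≤ Lxx) (hLyy : 0 ≤ Lyy) (hLyx : 0 < Lyx) (hLxy : 0 < Lxy)
    (hμx : 0 < μx) (hμy : 0 < μy) (hρ0 : 0 < ρ) (hρ1 : ρ < 1)
    (hne : ∃ τ : ℝ, 0 < τ ∧ (sapdS Lxx Lyy Lyx μx μy ρ τ).Nonempty) :
    IsLeast {τ : ℝ | 0 < τ ∧ (sapdS Lxx Lyy Lyx μx μy ρ τ).Nonempty}
      ((1 - ρ) / (μx * ρ)) ∧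
    (∀ τ₁ τ₂ : ℝ, (1 - ρ) / (μx * ρ) ≤ τ₂ → τ₂ ≤ τ₁ →
      sapdS Lxx Lyy Lyx μx μy ρ τ₁ ⊆ sapdS Lxx Lyy Lyx μx μy ρ τ₂) := by
  have hτpos : 0 < (1 - ρ) / (μx * ρ) := by
    apply div_pos (by linarith) (by positivity)
  -- lower bound
  have hlb : ∀ τ ∈ {τ : ℝ | 0 < τ ∧ (sapdS Lxx Lyy Lyx μx μy ρ τ).Nonempty},
      (1 - ρ) / (μx * ρ) ≤ τ := by
    rintro τ ⟨hτ, ⟨⟨σ, θ, α⟩, hσ, hθ, hα, hασ, hpsd⟩⟩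
    have h0 := hpsd.dotProduct_mulVec_nonneg ![1, 0, 0, 0, 0]
    rw [sapdG_quad] at h0
    norm_num [Matrix.cons_val_two, Matrix.cons_val_three, Matrix.cons_val_four, Matrix.tail_cons] at h0
    have hρτ : (0:ℝ) < ρ * τ := by positivity
    rw [div_le_iff₀ (by positivity)]
    have hc0 : 0 ≤ τ⁻¹ + μx - τ⁻¹ * ρ⁻¹ := by linarith
    have e1 : τ⁻¹ + μx - τ⁻¹ * ρ⁻¹ = (τ * (μx * ρ) - (1 - ρ)) / (ρ * τ) := by
      field_simp
      ring
    rw [e1] at hc0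
    have := (div_nonneg_iff.mp hc0)
    rcases this with ⟨h, -⟩ | ⟨-, h⟩
    · linarith
    · linarith
  -- monotonicity
  have hmono : ∀ τ₁ τ₂ : ℝ, (1 - ρ) / (μx * ρ) ≤ τ₂ → τ₂ ≤ τ₁ →
      sapdS Lxx Lyy Lyx μx μy ρ τ₁ ⊆ sapdS Lxx Lyy Lyx μx μy ρ τ₂ := by
    rintro τ₁ τ₂ h2 h21 ⟨σ, θ, α⟩ ⟨hσ, hθ, hα, hασ, hpsd⟩
    exact ⟨hσ, hθ, hα, hασ,
      sapdG_mono Lxx Lyy Lyx μx μy τ₁ τ₂ σ θ α ρ hμx hρ0 h2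
        (lt_of_lt_of_le hτpos h2) h21 hpsd⟩
  refine ⟨⟨⟨hτpos, ?_⟩, hlb⟩, hmono⟩
  obtain ⟨τ, hτ, hS⟩ := hne
  have hle : (1 - ρ) / (μx * ρ) ≤ τ := hlb τ ⟨hτ, hS⟩
  obtain ⟨p, hp⟩ := hS
  exact ⟨p, hmono τ ((1 - ρ) / (μx * ρ)) le_rfl hle hp⟩
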